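/- Let n, d ≥ 1 and let U_i, V_i ∈ ℝ^{d×d} (1 ≤ i ≤ n) satisfy Assumption 2, with Q ∈ ℝ^{dn×dn} the associated block-factorizable matrix. Let S = {t_1 < t_2 < … < t_k} be a nonempty subset of {1,…,n}. Then the block principal submatrix Q_{[S]} is invertible and hat(Q_{[S]}⁻¹) = Σ_{ℓ=1}^{k−1} Λ_{[t_ℓ→t_{ℓ+1}]} + Λ_{[t_k→n+1]}. -/

import Mathlib

open Matrix BigOperators
open scoped Classical

/-- The block-factorizable matrix with `(i,j)`-th `d×d` block `U_i V_jᵀ` for `i ≤ j`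
and `V_i U_jᵀ` for `i > j`. -/
noncomputable def blockQ (n d : ℕ) (U V : Fin n → Matrix (Fin d) (Fin d) ℝ) :
    Matrix (Fin n × Fin d) (Fin n × Fin d) ℝ :=
  Matrix.of fun p q =>
    if p.1 ≤ q.1 then (U p.1 * (V q.1)ᵀ) p.2 q.2 else (V p.1 * (U q.1)ᵀ) p.2 q.2

/-- Assumption 2. -/
def Assumption2 (n d : ℕ) (U V : Fin n → Matrix (Fin d) (Fin d) ℝ) : Prop :=
  (∀ i : Fin n, (U i * (V i)ᵀ).PosDef) ∧
    ∀ i j : Fin n, i < j → (U i * (V i)ᵀ - U i * (U j)⁻¹ * V j * (U i)ᵀ).PosDef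

/-- `E_i`, the `dn×d` block column matrix whose `i`-th block is the identity. -/
def Emat (n d : ℕ) (i : Fin n) : Matrix (Fin n × Fin d) (Fin d) ℝ :=
  Matrix.of fun p b => if p.1 = i ∧ p.2 = b then 1 else 0

/-- `Λ_{[i→j]}` for `1 ≤ i < j ≤ n`. -/
noncomputable def BLamMid (n d : ℕ) (U V : Fin n → Matrix (Fin d) (Fin d) ℝ) (i j : Fin n) :
    Matrix (Fin n × Fin d) (Fin n × Fin d) ℝ :=
  (Emat n d i - Emat n d j * ((U j)ᵀ)⁻¹ * (U i)ᵀ) *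
    (U i * (V i)ᵀ - U i * (U j)⁻¹ * V j * (U i)ᵀ)⁻¹ *
    (Emat n d i - Emat n d j * ((U j)ᵀ)⁻¹ * (U i)ᵀ)ᵀ

/-- `Λ_{[i→n+1]} = E_i (U_i V_iᵀ)⁻¹ E_iᵀ`. -/
noncomputable def BLamEnd (n d : ℕ) (U V : Fin n → Matrix (Fin d) (Fin d) ℝ) (i : Fin n) :
    Matrix (Fin n × Fin d) (Fin n × Fin d) ℝ :=
  Emat n d i * (U i * (V i)ᵀ)⁻¹ * (Emat n d i)ᵀ

/-- The block principal submatrix of `Q` with block indices in `S`. -/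
noncomputable def blockSubMat (n d : ℕ) (Q : Matrix (Fin n × Fin d) (Fin n × Fin d) ℝ)
    (S : Finset (Fin n)) :
    Matrix {r : Fin n × Fin d // r.1 ∈ S} {r : Fin n × Fin d // r.1 ∈ S} ℝ :=
  Q.submatrix (fun p => (p : Fin n × Fin d)) (fun p => (p : Fin n × Fin d))

/-- The `dn×dn` matrix agreeing with `(Q_{[S]})⁻¹` on blocks indexed by `S×S`
and `0` elsewhere. -/
noncomputable def blockHatInv (n d : ℕ) (Q : Matrix (Fin n × Fin d) (Fin n × Fin d) ℝ)
    (S : Finset (Fin n)) : Matrix (Fin n × Fin d) (Fin n × Fin d) ℝ :=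
  Matrix.of fun p q =>
    if hp : p.1 ∈ S then
      if hq : q.1 ∈ S then (blockSubMat n d Q S)⁻¹ ⟨p, hp⟩ ⟨q, hq⟩ else 0
    else 0

section Aux

variable {n d : ℕ} {U V : Fin n → Matrix (Fin d) (Fin d) ℝ}

/-- The `d×d` block of `blockQ`. -/
noncomputable def Qblk (U V : Fin n → Matrix (Fin d) (Fin d) ℝ) (p r : Fin n) :
    Matrix (Fin d) (Fin d) ℝ :=
  if p ≤ r then U p * (V r)ᵀ else V p * (U r)ᵀ

/-- The Schur-type complement appearing in `BLamMid`. -/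
noncomputable def Dmat (U V : Fin n → Matrix (Fin d) (Fin d) ℝ) (i j : Fin n) :
    Matrix (Fin d) (Fin d) ℝ :=
  U i * (V i)ᵀ - U i * (U j)⁻¹ * V j * (U i)ᵀ

/-- The column factor of `BLamMid`. -/
noncomputable def Wmat (U V : Fin n → Matrix (Fin d) (Fin d) ℝ) (i j : Fin n) :
    Matrix (Fin n × Fin d) (Fin d) ℝ :=
  Emat n d i - Emat n d j * (((U j)ᵀ)⁻¹ * (U i)ᵀ)

lemma blockQ_apply' (p q : Fin n × Fin d) :
    blockQ n d U V p q = Qblk U V p.1 q.1 p.2 q.2 := by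
  unfold blockQ Qblk
  by_cases h : p.1 ≤ q.1 <;> simp [h]

lemma symmUV (hA : Assumption2 n d U V) (i : Fin n) :
    V i * (U i)ᵀ = U i * (V i)ᵀ := by
  have h := (hA.1 i).isHermitian
  have : (U i * (V i)ᵀ)ᵀ = U i * (V i)ᵀ := by
    ext a b
    simpa using h.apply a b
  calc V i * (U i)ᵀ = (U i * (V i)ᵀ)ᵀ := by rw [Matrix.transpose_mul, Matrix.transpose_transpose]
    _ = U i * (V i)ᵀ := this

lemma detUV_unit (hA : Assumption2 n d U V) (i : Fin n) :
    IsUnit (U i * (V i)ᵀ).det :=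
  isUnit_iff_ne_zero.mpr (hA.1 i).det_pos.ne'

lemma detU_unit (hA : Assumption2 n d U V) (i : Fin n) : IsUnit (U i).det := by
  have h := detUV_unit hA i
  rw [Matrix.det_mul] at h
  exact isUnit_of_mul_isUnit_left h

lemma detVt_unit (hA : Assumption2 n d U V) (i : Fin n) : IsUnit ((V i)ᵀ).det := by
  have h := detUV_unit hA i
  rw [Matrix.det_mul] at h
  exact isUnit_of_mul_isUnit_right h

lemma detUt_unit (hA : Assumption2 n d U V) (i : Fin n) : IsUnit ((U i)ᵀ).det := by
  rw [Matrix.det_transpose]; exact detU_unit hA i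

lemma detD_unit (hA : Assumption2 n d U V) {i j : Fin n} (hij : i < j) :
    IsUnit (Dmat U V i j).det :=
  isUnit_iff_ne_zero.mpr (hA.2 i j hij).det_pos.ne'

lemma VtUtinv (hA : Assumption2 n d U V) (i : Fin n) :
    (V i)ᵀ * ((U i)ᵀ)⁻¹ = (U i)⁻¹ * V i := by
  have hU := detU_unit hA i
  have hUt := detUt_unit hA i
  calc (V i)ᵀ * ((U i)ᵀ)⁻¹
      = (U i)⁻¹ * (U i * (V i)ᵀ) * ((U i)ᵀ)⁻¹ := by
        rw [Matrix.nonsing_inv_mul_cancel_left _ _ hU]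
    _ = (U i)⁻¹ * (V i * (U i)ᵀ) * ((U i)ᵀ)⁻¹ := by rw [symmUV hA i]
    _ = (U i)⁻¹ * V i := by
        rw [mul_assoc ((U i)⁻¹), mul_assoc (V i), Matrix.mul_nonsing_inv _ hUt, mul_one]

end Aux

section Aux2

variable {n d : ℕ} {U V : Fin n → Matrix (Fin d) (Fin d) ℝ}

lemma Emat_apply' (i : Fin n) (p : Fin n × Fin d) (b : Fin d) :
    Emat n d i p b = if p.1 = i then (1 : Matrix (Fin d) (Fin d) ℝ) p.2 b else 0 := by
  unfold Emat
  by_cases h : p.1 = i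
  · by_cases h2 : p.2 = b <;> simp [h, h2, Matrix.one_apply]
  · simp [h]

/-- `Q * Emat i` picks out the `i`-th block column of `Q`. -/
lemma Q_mul_Emat (i : Fin n) (p : Fin n × Fin d) (b : Fin d) :
    (blockQ n d U V * Emat n d i) p b = Qblk U V p.1 i p.2 b := by
  rw [Matrix.mul_apply]
  rw [show ∑ r : Fin n × Fin d, blockQ n d U V p r * Emat n d i r b
      = ∑ r : Fin n, ∑ c : Fin d, blockQ n d U V p (r, c) * Emat n d i (r, c) b from
    Fintype.sum_prod_type _]
  simp only [Emat_apply', blockQ_apply']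
  rw [Finset.sum_eq_single i]
  · simp [Matrix.one_apply, mul_ite]
  · intro r _ hr; simp [hr]
  · simp

/-- Multiplying a `dn×d` times `d×d` on the right acts blockwise. -/
lemma Emat_mul_apply (i : Fin n) (X : Matrix (Fin d) (Fin d) ℝ) (p : Fin n × Fin d) (b : Fin d) :
    (Emat n d i * X) p b = if p.1 = i then X p.2 b else 0 := by
  rw [Matrix.mul_apply]
  simp only [Emat_apply']
  by_cases h : p.1 = i
  · simp [h, Matrix.one_apply, boole_mul]
  · simp [h]

/-- Multiplying a `d×d` matrix by `(Emat i)ᵀ` on the right places it in block column `i`. -/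
lemma mul_EmatT_apply (i : Fin n) (A : Matrix (Fin d) (Fin d) ℝ) (a : Fin d)
    (q : Fin n × Fin d) :
    (A * (Emat n d i)ᵀ) a q = if q.1 = i then A a q.2 else 0 := by
  rw [Matrix.mul_apply]
  simp only [Matrix.transpose_apply, Emat_apply']
  by_cases h : q.1 = i
  · simp [h, Matrix.one_apply, mul_ite]
  · simp [h]

lemma Wmat_apply (i j : Fin n) (p : Fin n × Fin d) (b : Fin d) :
    Wmat U V i j p b =
      (if p.1 = i then (1 : Matrix (Fin d) (Fin d) ℝ) p.2 b else 0)
        - (if p.1 = j then (((U j)ᵀ)⁻¹ * (U i)ᵀ) p.2 b else 0) := by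
  unfold Wmat
  rw [Matrix.sub_apply, Emat_apply', Emat_mul_apply]

lemma Q_mul_Wmat (i j : Fin n) (p : Fin n × Fin d) (b : Fin d) :
    (blockQ n d U V * Wmat U V i j) p b =
      Qblk U V p.1 i p.2 b - (Qblk U V p.1 j * (((U j)ᵀ)⁻¹ * (U i)ᵀ)) p.2 b := by
  unfold Wmat
  set X := ((U j)ᵀ)⁻¹ * (U i)ᵀ with hX
  clear_value X
  rw [Matrix.mul_sub, Matrix.sub_apply, Q_mul_Emat]
  congr 1
  rw [← Matrix.mul_assoc]
  rw [show ((blockQ n d U V * Emat n d j) * X) p b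
      = ∑ c, (blockQ n d U V * Emat n d j) p c * X c b from Matrix.mul_apply]
  rw [show (Qblk U V p.1 j * X) p.2 b
      = ∑ c, Qblk U V p.1 j p.2 c * X c b from Matrix.mul_apply]
  simp only [Q_mul_Emat]

lemma Q_mul_Wmat_le (hA : Assumption2 n d U V) {i j : Fin n} (hij : i < j)
    {p : Fin n × Fin d} (hpi : p.1 ≤ i) (b : Fin d) :
    (blockQ n d U V * Wmat U V i j) p b = (U p.1 * ((U i)⁻¹ * Dmat U V i j)) p.2 b := by
  rw [Q_mul_Wmat]
  have hpj : p.1 ≤ j := (hpi.trans_lt hij).le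
  rw [show Qblk U V p.1 i = U p.1 * (V i)ᵀ from if_pos hpi,
      show Qblk U V p.1 j = U p.1 * (V j)ᵀ from if_pos hpj]
  rw [← Matrix.sub_apply]
  have hkey : (V j)ᵀ * ((U j)ᵀ)⁻¹ = (U j)⁻¹ * V j := VtUtinv hA j
  have hU := detU_unit hA i
  have hmat : U p.1 * (V i)ᵀ - U p.1 * (V j)ᵀ * (((U j)ᵀ)⁻¹ * (U i)ᵀ)
      = U p.1 * ((U i)⁻¹ * Dmat U V i j) := by
    calc U p.1 * (V i)ᵀ - U p.1 * (V j)ᵀ * (((U j)ᵀ)⁻¹ * (U i)ᵀ)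
        = U p.1 * ((V i)ᵀ - (U j)⁻¹ * V j * (U i)ᵀ) := by
          rw [Matrix.mul_sub]
          congr 1
          rw [mul_assoc (U p.1), ← mul_assoc ((V j)ᵀ), hkey]
      _ = U p.1 * ((U i)⁻¹ * Dmat U V i j) := by
          unfold Dmat
          congr 1
          rw [Matrix.mul_sub, Matrix.nonsing_inv_mul_cancel_left _ _ hU]
          congr 1
          rw [show U i * (U j)⁻¹ * V j * (U i)ᵀ = U i * ((U j)⁻¹ * V j * (U i)ᵀ) by
              noncomm_ring,
            Matrix.nonsing_inv_mul_cancel_left _ _ hU]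
  rw [hmat]

lemma Q_mul_Wmat_ge (hA : Assumption2 n d U V) {i j : Fin n} (hij : i < j)
    {p : Fin n × Fin d} (hjp : j ≤ p.1) (b : Fin d) :
    (blockQ n d U V * Wmat U V i j) p b = 0 := by
  rw [Q_mul_Wmat]
  have hUt := detUt_unit hA j
  have hpi : ¬ p.1 ≤ i := not_le.mpr (lt_of_lt_of_le hij hjp)
  rcases eq_or_lt_of_le hjp with h | h
  · rw [← h]
    rw [show Qblk U V j i = V j * (U i)ᵀ from if_neg (not_le.mpr hij),
      show Qblk U V j j = U j * (V j)ᵀ from if_pos le_rfl,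
      show U j * (V j)ᵀ = V j * (U j)ᵀ from (symmUV hA j).symm,
      show V j * (U j)ᵀ * (((U j)ᵀ)⁻¹ * (U i)ᵀ) = V j * (U i)ᵀ by
        rw [← mul_assoc, Matrix.mul_nonsing_inv_cancel_right _ _ hUt]]
    simp
  · rw [show Qblk U V p.1 i = V p.1 * (U i)ᵀ from if_neg hpi,
      show Qblk U V p.1 j = V p.1 * (U j)ᵀ from if_neg (not_le.mpr h),
      show V p.1 * (U j)ᵀ * (((U j)ᵀ)⁻¹ * (U i)ᵀ) = V p.1 * (U i)ᵀ by
        rw [← mul_assoc, Matrix.mul_nonsing_inv_cancel_right _ _ hUt]]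
    simp

end Aux2

section Aux3

variable {n d : ℕ} {U V : Fin n → Matrix (Fin d) (Fin d) ℝ}

lemma BLamMid_eq (i j : Fin n) :
    BLamMid n d U V i j = Wmat U V i j * (Dmat U V i j)⁻¹ * (Wmat U V i j)ᵀ := by
  unfold BLamMid Wmat Dmat
  rw [Matrix.mul_assoc (Emat n d j)]

lemma Q_mul_BLamMid_ge (hA : Assumption2 n d U V) {i j : Fin n} (hij : i < j)
    {p : Fin n × Fin d} (hjp : j ≤ p.1) (q : Fin n × Fin d) :
    (blockQ n d U V * BLamMid n d U V i j) p q = 0 := by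
  rw [BLamMid_eq, ← Matrix.mul_assoc, ← Matrix.mul_assoc]
  rw [show (blockQ n d U V * Wmat U V i j * (Dmat U V i j)⁻¹ * (Wmat U V i j)ᵀ) p q
      = ∑ c, (blockQ n d U V * Wmat U V i j * (Dmat U V i j)⁻¹) p c * (Wmat U V i j)ᵀ c q
      from Matrix.mul_apply]
  apply Finset.sum_eq_zero
  intro c _
  rw [show (blockQ n d U V * Wmat U V i j * (Dmat U V i j)⁻¹) p c
      = ∑ e, (blockQ n d U V * Wmat U V i j) p e * (Dmat U V i j)⁻¹ e c from Matrix.mul_apply]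
  simp [Q_mul_Wmat_ge hA hij hjp]

lemma Q_mul_BLamMid_le (hA : Assumption2 n d U V) {i j : Fin n} (hij : i < j)
    {p : Fin n × Fin d} (hpi : p.1 ≤ i) (q : Fin n × Fin d) :
    (blockQ n d U V * BLamMid n d U V i j) p q =
      (if q.1 = i then (U p.1 * (U i)⁻¹) p.2 q.2 else 0)
        - (if q.1 = j then (U p.1 * (U j)⁻¹) p.2 q.2 else 0) := by
  rw [BLamMid_eq, ← Matrix.mul_assoc, ← Matrix.mul_assoc]
  rw [show (blockQ n d U V * Wmat U V i j * (Dmat U V i j)⁻¹ * (Wmat U V i j)ᵀ) p q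
      = ∑ c, (blockQ n d U V * Wmat U V i j * (Dmat U V i j)⁻¹) p c * (Wmat U V i j)ᵀ c q
      from Matrix.mul_apply]
  have hrow : ∀ c, (blockQ n d U V * Wmat U V i j * (Dmat U V i j)⁻¹) p c
      = (U p.1 * (U i)⁻¹) p.2 c := by
    intro c
    rw [show (blockQ n d U V * Wmat U V i j * (Dmat U V i j)⁻¹) p c
        = ∑ e, (blockQ n d U V * Wmat U V i j) p e * (Dmat U V i j)⁻¹ e c
        from Matrix.mul_apply]
    simp only [fun e => Q_mul_Wmat_le hA hij hpi (b := e)]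
    rw [show ∑ e, (U p.1 * ((U i)⁻¹ * Dmat U V i j)) p.2 e * (Dmat U V i j)⁻¹ e c
        = (U p.1 * ((U i)⁻¹ * Dmat U V i j) * (Dmat U V i j)⁻¹) p.2 c
        from (Matrix.mul_apply).symm]
    rw [show U p.1 * ((U i)⁻¹ * Dmat U V i j) * (Dmat U V i j)⁻¹ = U p.1 * (U i)⁻¹ from by
      rw [← Matrix.mul_assoc, Matrix.mul_nonsing_inv_cancel_right _ _ (detD_unit hA hij)]]
  simp only [hrow, Matrix.transpose_apply, Wmat_apply, mul_sub]
  rw [Finset.sum_sub_distrib]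
  congr 1
  · by_cases h : q.1 = i
    · simp [h, Matrix.one_apply, mul_ite]
    · simp [h]
  · by_cases h : q.1 = j
    · simp only [h, if_true]
      rw [show ∑ c, (U p.1 * (U i)⁻¹) p.2 c * (((U j)ᵀ)⁻¹ * (U i)ᵀ) q.2 c
          = ∑ c, (U p.1 * (U i)⁻¹) p.2 c * ((((U j)ᵀ)⁻¹ * (U i)ᵀ))ᵀ c q.2 from rfl]
      rw [show ∑ c, (U p.1 * (U i)⁻¹) p.2 c * ((((U j)ᵀ)⁻¹ * (U i)ᵀ))ᵀ c q.2
          = ((U p.1 * (U i)⁻¹) * ((((U j)ᵀ)⁻¹ * (U i)ᵀ))ᵀ) p.2 q.2 from (Matrix.mul_apply).symm]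
      congr 1
      rw [Matrix.transpose_mul, Matrix.transpose_transpose, ← Matrix.transpose_nonsing_inv,
        Matrix.transpose_transpose]
      rw [Matrix.mul_assoc, Matrix.nonsing_inv_mul_cancel_left _ _ (detU_unit hA i)]
    · simp [h]

lemma Q_mul_BLamEnd_le (hA : Assumption2 n d U V) {i : Fin n}
    {p : Fin n × Fin d} (hpi : p.1 ≤ i) (q : Fin n × Fin d) :
    (blockQ n d U V * BLamEnd n d U V i) p q =
      if q.1 = i then (U p.1 * (U i)⁻¹) p.2 q.2 else 0 := by
  unfold BLamEnd
  rw [← Matrix.mul_assoc, ← Matrix.mul_assoc]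
  rw [show (blockQ n d U V * Emat n d i * (U i * (V i)ᵀ)⁻¹ * (Emat n d i)ᵀ) p q
      = ∑ c, (blockQ n d U V * Emat n d i * (U i * (V i)ᵀ)⁻¹) p c * (Emat n d i)ᵀ c q
      from Matrix.mul_apply]
  have hrow : ∀ c, (blockQ n d U V * Emat n d i * (U i * (V i)ᵀ)⁻¹) p c
      = (U p.1 * (U i)⁻¹) p.2 c := by
    intro c
    rw [show (blockQ n d U V * Emat n d i * (U i * (V i)ᵀ)⁻¹) p c
        = ∑ e, (blockQ n d U V * Emat n d i) p e * (U i * (V i)ᵀ)⁻¹ e c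
        from Matrix.mul_apply]
    simp only [Q_mul_Emat]
    rw [show Qblk U V p.1 i = U p.1 * (V i)ᵀ from if_pos hpi]
    rw [show ∑ e, (U p.1 * (V i)ᵀ) p.2 e * (U i * (V i)ᵀ)⁻¹ e c
        = ((U p.1 * (V i)ᵀ) * (U i * (V i)ᵀ)⁻¹) p.2 c from (Matrix.mul_apply).symm]
    rw [show U p.1 * (V i)ᵀ * (U i * (V i)ᵀ)⁻¹ = U p.1 * (U i)⁻¹ from by
      rw [Matrix.mul_inv_rev, Matrix.mul_assoc,
        Matrix.mul_nonsing_inv_cancel_left _ _ (detVt_unit hA i)]]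
  calc ∑ c, (blockQ n d U V * Emat n d i * (U i * (V i)ᵀ)⁻¹) p c * (Emat n d i)ᵀ c q
      = ∑ c, (U p.1 * (U i)⁻¹) p.2 c * (Emat n d i)ᵀ c q := by simp only [hrow]
    _ = ((U p.1 * (U i)⁻¹) * (Emat n d i)ᵀ) p.2 q := (Matrix.mul_apply).symm
    _ = _ := mul_EmatT_apply _ _ _ _

lemma BLamMid_row_zero {i j : Fin n} {p : Fin n × Fin d} (h1 : p.1 ≠ i) (h2 : p.1 ≠ j)
    (q : Fin n × Fin d) : BLamMid n d U V i j p q = 0 := by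
  rw [BLamMid_eq]
  rw [show (Wmat U V i j * (Dmat U V i j)⁻¹ * (Wmat U V i j)ᵀ) p q
      = ∑ c, (Wmat U V i j * (Dmat U V i j)⁻¹) p c * (Wmat U V i j)ᵀ c q
      from Matrix.mul_apply]
  apply Finset.sum_eq_zero
  intro c _
  rw [show (Wmat U V i j * (Dmat U V i j)⁻¹) p c
      = ∑ e, Wmat U V i j p e * (Dmat U V i j)⁻¹ e c from Matrix.mul_apply]
  simp [Wmat_apply, h1, h2]

lemma BLamMid_col_zero {i j : Fin n} (p : Fin n × Fin d) {q : Fin n × Fin d}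
    (h1 : q.1 ≠ i) (h2 : q.1 ≠ j) : BLamMid n d U V i j p q = 0 := by
  rw [BLamMid_eq]
  rw [show (Wmat U V i j * (Dmat U V i j)⁻¹ * (Wmat U V i j)ᵀ) p q
      = ∑ c, (Wmat U V i j * (Dmat U V i j)⁻¹) p c * (Wmat U V i j)ᵀ c q
      from Matrix.mul_apply]
  apply Finset.sum_eq_zero
  intro c _
  rw [Matrix.transpose_apply, Wmat_apply]
  simp [h1, h2]

lemma BLamEnd_row_zero {i : Fin n} {p : Fin n × Fin d} (h1 : p.1 ≠ i)
    (q : Fin n × Fin d) : BLamEnd n d U V i p q = 0 := by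
  unfold BLamEnd
  rw [show (Emat n d i * (U i * (V i)ᵀ)⁻¹ * (Emat n d i)ᵀ) p q
      = ∑ c, (Emat n d i * (U i * (V i)ᵀ)⁻¹) p c * (Emat n d i)ᵀ c q from Matrix.mul_apply]
  apply Finset.sum_eq_zero
  intro c _
  rw [Emat_mul_apply]
  simp [h1]

lemma BLamEnd_col_zero {i : Fin n} (p : Fin n × Fin d) {q : Fin n × Fin d} (h1 : q.1 ≠ i) :
    BLamEnd n d U V i p q = 0 := by
  unfold BLamEnd
  rw [show (Emat n d i * (U i * (V i)ᵀ)⁻¹ * (Emat n d i)ᵀ) p q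
      = ∑ c, (Emat n d i * (U i * (V i)ᵀ)⁻¹) p c * (Emat n d i)ᵀ c q from Matrix.mul_apply]
  apply Finset.sum_eq_zero
  intro c _
  rw [Matrix.transpose_apply, Emat_apply']
  simp [h1]

end Aux3

theorem stmt_11 (n d : ℕ) (hn : 1 ≤ n) (hd : 1 ≤ d)
    (U V : Fin n → Matrix (Fin d) (Fin d) ℝ) (hA : Assumption2 n d U V)
    (S : Finset (Fin n)) (k : ℕ) (hk : 0 < k) (t : Fin k → Fin n)
    (hmono : StrictMono t) (hrange : S = Finset.image t Finset.univ) :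
    IsUnit (blockSubMat n d (blockQ n d U V) S) ∧
      blockHatInv n d (blockQ n d U V) S =
        (∑ ℓ : Fin k,
            if h : (ℓ : ℕ) + 1 < k then BLamMid n d U V (t ℓ) (t ⟨(ℓ : ℕ) + 1, h⟩) else 0) +
          BLamEnd n d U V (t ⟨k - 1, by omega⟩) := by
  have hkk : k - 1 < k := by omega
  set Q := blockQ n d U V with hQdef
  set N : Matrix (Fin n × Fin d) (Fin n × Fin d) ℝ :=
    (∑ ℓ : Fin k,
        if h : (ℓ : ℕ) + 1 < k then BLamMid n d U V (t ℓ) (t ⟨(ℓ : ℕ) + 1, h⟩) else 0) +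
      BLamEnd n d U V (t ⟨k - 1, hkk⟩) with hNdef
  have hmem : ∀ r : Fin n, r ∈ S ↔ ∃ m : Fin k, t m = r := by
    intro r; subst hrange; simp
  -- row support
  have hNrow : ∀ p q : Fin n × Fin d, p.1 ∉ S → N p q = 0 := by
    intro p q hp
    have hne : ∀ m : Fin k, p.1 ≠ t m := fun m h => hp ((hmem p.1).mpr ⟨m, h.symm⟩)
    rw [hNdef, Matrix.add_apply, Matrix.sum_apply]
    rw [BLamEnd_row_zero (hne _) q, add_zero]
    apply Finset.sum_eq_zero
    intro ℓ _
    by_cases h : (ℓ : ℕ) + 1 < k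
    · rw [dif_pos h, BLamMid_row_zero (hne _) (hne _) q]
    · rw [dif_neg h, Matrix.zero_apply]
  -- column support
  have hNcol : ∀ p q : Fin n × Fin d, q.1 ∉ S → N p q = 0 := by
    intro p q hq
    have hne : ∀ m : Fin k, q.1 ≠ t m := fun m h => hq ((hmem q.1).mpr ⟨m, h.symm⟩)
    rw [hNdef, Matrix.add_apply, Matrix.sum_apply]
    rw [BLamEnd_col_zero p (hne _), add_zero]
    apply Finset.sum_eq_zero
    intro ℓ _
    by_cases h : (ℓ : ℕ) + 1 < k
    · rw [dif_pos h, BLamMid_col_zero p (hne _) (hne _)]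
    · rw [dif_neg h, Matrix.zero_apply]
  -- main computation
  have hQN : ∀ p q : Fin n × Fin d, p.1 ∈ S → (Q * N) p q = if p = q then 1 else 0 := by
    intro p q hp
    obtain ⟨m, hm⟩ := (hmem p.1).mp hp
    have hmlt : (m : ℕ) < k := m.isLt
    set F : ℕ → ℝ := fun x =>
      if h : x < k then
        (if q.1 = t ⟨x, h⟩ then (U p.1 * (U (t ⟨x, h⟩))⁻¹) p.2 q.2 else 0)
      else 0 with hF
    rw [hNdef, Matrix.mul_add, Matrix.mul_sum, Matrix.add_apply, Matrix.sum_apply]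
    have hterm : ∀ ℓ : Fin k,
        (Q * (if h : (ℓ : ℕ) + 1 < k then BLamMid n d U V (t ℓ) (t ⟨(ℓ : ℕ) + 1, h⟩) else 0)) p q
          = if (m : ℕ) ≤ (ℓ : ℕ) ∧ (ℓ : ℕ) + 1 < k then F ℓ - F ((ℓ : ℕ) + 1) else 0 := by
      intro ℓ
      by_cases h : (ℓ : ℕ) + 1 < k
      · rw [dif_pos h]
        have hij : t ℓ < t ⟨(ℓ : ℕ) + 1, h⟩ := hmono (by simp [Fin.lt_def])
        by_cases hm2 : (m : ℕ) ≤ (ℓ : ℕ)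
        · have hple : p.1 ≤ t ℓ := by
            rw [← hm]; exact hmono.monotone (Fin.le_def.mpr hm2)
          rw [Q_mul_BLamMid_le hA hij hple q, if_pos (And.intro hm2 h)]
          rw [hF]
          simp only
          rw [dif_pos ℓ.isLt, dif_pos h, Fin.eta]
        · have hge : t ⟨(ℓ : ℕ) + 1, h⟩ ≤ p.1 := by
            rw [← hm]; exact hmono.monotone (Fin.le_def.mpr (show (ℓ:ℕ)+1 ≤ (m:ℕ) by omega))
          rw [Q_mul_BLamMid_ge hA hij hge q, if_neg (by tauto)]
      · rw [dif_neg h, mul_zero, Matrix.zero_apply, if_neg (by tauto)]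
    have hend : (Q * BLamEnd n d U V (t ⟨k - 1, hkk⟩)) p q = F (k - 1) := by
      have hple : p.1 ≤ t ⟨k - 1, hkk⟩ := by
        rw [← hm]; exact hmono.monotone (Fin.le_def.mpr (show (m:ℕ) ≤ k-1 by omega))
      rw [Q_mul_BLamEnd_le hA hple q, hF]
      simp only
      rw [dif_pos hkk]
    rw [hend]
    rw [show (∑ ℓ : Fin k,
        (Q * (if h : (ℓ : ℕ) + 1 < k then BLamMid n d U V (t ℓ) (t ⟨(ℓ : ℕ) + 1, h⟩) else 0)) p q)
        = ∑ ℓ : Fin k, (if (m : ℕ) ≤ (ℓ : ℕ) ∧ (ℓ : ℕ) + 1 < k then F ℓ - F ((ℓ : ℕ) + 1) else 0)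
      from Finset.sum_congr rfl fun ℓ _ => hterm ℓ]
    rw [show (∑ ℓ : Fin k, (if (m : ℕ) ≤ (ℓ : ℕ) ∧ (ℓ : ℕ) + 1 < k then F ℓ - F ((ℓ : ℕ) + 1) else 0))
        = ∑ x ∈ Finset.range k, (if (m : ℕ) ≤ x ∧ x + 1 < k then F x - F (x + 1) else 0)
      from Fin.sum_univ_eq_sum_range
        (fun x => if (m : ℕ) ≤ x ∧ x + 1 < k then F x - F (x + 1) else 0) k]
    rw [← Finset.sum_filter]
    rw [show (Finset.range k).filter (fun x => (m : ℕ) ≤ x ∧ x + 1 < k)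
        = Finset.Ico (m : ℕ) (k - 1) by
      ext x
      simp only [Finset.mem_filter, Finset.mem_range, Finset.mem_Ico]
      omega]
    rw [Finset.sum_Ico_eq_sum_range]
    rw [show (∑ i ∈ Finset.range (k - 1 - (m : ℕ)), (F ((m : ℕ) + i) - F ((m : ℕ) + i + 1)))
        = F ((m : ℕ) + 0) - F ((m : ℕ) + (k - 1 - (m : ℕ)))
      from Finset.sum_range_sub' (fun i => F ((m : ℕ) + i)) _]
    rw [show (m : ℕ) + 0 = (m : ℕ) from rfl,
      show (m : ℕ) + (k - 1 - (m : ℕ)) = k - 1 by omega]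
    rw [sub_add_cancel]
    rw [hF]
    simp only
    rw [dif_pos hmlt, Fin.eta, hm]
    rw [Matrix.mul_nonsing_inv _ (detU_unit hA p.1)]
    by_cases h : q.1 = p.1
    · rw [if_pos h, Matrix.one_apply]
      by_cases h2 : p = q
      · rw [if_pos h2, if_pos (congrArg Prod.snd h2)]
      · rw [if_neg h2, if_neg fun h3 => h2 (Prod.ext h.symm h3)]
    · rw [if_neg h, if_neg fun h2 => h (congrArg Prod.fst h2.symm)]
  -- right inverse on the subtype
  have hsub : blockSubMat n d Q S *
      (N.submatrix (fun p : {r : Fin n × Fin d // r.1 ∈ S} => (p : Fin n × Fin d))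
        (fun p : {r : Fin n × Fin d // r.1 ∈ S} => (p : Fin n × Fin d))) = 1 := by
    ext ⟨p, hp⟩ ⟨q, hq⟩
    rw [Matrix.mul_apply]
    simp only [blockSubMat, Matrix.submatrix_apply]
    rw [show (∑ r : {r : Fin n × Fin d // r.1 ∈ S}, Q p (r : Fin n × Fin d) * N (r : Fin n × Fin d) q)
        = ∑ r ∈ Finset.univ.filter (fun r : Fin n × Fin d => r.1 ∈ S), Q p r * N r q
      from (Finset.sum_subtype (p := fun r : Fin n × Fin d => r.1 ∈ S)
        (Finset.univ.filter (fun r : Fin n × Fin d => r.1 ∈ S)) (fun x => by simp)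
        (fun r => Q p r * N r q)).symm]
    rw [Finset.sum_subset (Finset.filter_subset _ _) (by
      intro r _ hr
      have hrS : r.1 ∉ S := by simpa using hr
      rw [hNrow r q hrS, mul_zero])]
    rw [← Matrix.mul_apply, hQN p q hp, Matrix.one_apply]
    by_cases h : p = q
    · rw [if_pos h, if_pos (Subtype.ext h)]
    · rw [if_neg h, if_neg fun h2 => h (congrArg Subtype.val h2)]
  constructor
  · exact (Matrix.isUnit_iff_isUnit_det _).mpr (Matrix.isUnit_det_of_right_inverse hsub)
  · have hinv := Matrix.inv_eq_right_inv hsub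
    have hfinal : blockHatInv n d Q S = N := by
      ext p q
      unfold blockHatInv
      simp only [Matrix.of_apply]
      by_cases hp : p.1 ∈ S
      · by_cases hq : q.1 ∈ S
        · rw [dif_pos hp, dif_pos hq, hinv]
          rfl
        · rw [dif_pos hp, dif_neg hq]
          exact (hNcol p q hq).symm
      · rw [dif_neg hp]
        exact (hNrow p q hp).symm
    exact hfinal
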